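/- For every real x, e^x · ∑_{n=0}^∞ x^{3n}/(3n)! = (2/3) ∑_{m=0}^∞ (x^m/m!) · (2^{m-1} + cos(mπ/3)). -/

import Mathlib

open Complex

noncomputable def HMSω : ℂ := (-1 + Real.sqrt 3 * Complex.I) / 2

lemma HMS_s_sq : ((Real.sqrt 3 : ℝ) : ℂ) ^ 2 = 3 := by
  norm_cast
  rw [Real.sq_sqrt (by norm_num : (0:ℝ) ≤ 3)]

lemma HMSω_cube : HMSω ^ 3 = 1 := by
  unfold HMSω
  have h := HMS_s_sq
  have hI := Complex.I_sq
  linear_combination ((((Real.sqrt 3:ℝ):ℂ) * Complex.I ^ 3 - 3 * Complex.I ^ 2) / 8) * h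
    + ((3 * ((Real.sqrt 3:ℝ):ℂ) * Complex.I - 9) / 8) * hI

lemma HMSω_sum : 1 + HMSω + HMSω ^ 2 = 0 := by
  unfold HMSω
  have h := HMS_s_sq
  have hI := Complex.I_sq
  linear_combination (Complex.I ^ 2 / 4) * h + (3 / 4) * hI

lemma HMS_exp_tsum (z : ℂ) : ∑' n : ℕ, z ^ n / n.factorial = Complex.exp z := by
  rw [Complex.exp_eq_exp_ℂ, NormedSpace.exp_eq_tsum_div]

lemma HMS_summable (z : ℂ) : Summable fun n : ℕ => z ^ n / n.factorial :=
  NormedSpace.expSeries_div_summable z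

lemma HMS_filter (j : ℕ) :
    (1 : ℂ) + HMSω ^ j + HMSω ^ (2 * j) = if 3 ∣ j then 3 else 0 := by
  obtain ⟨q, r, hr, rfl⟩ : ∃ q r, r < 3 ∧ j = 3 * q + r :=
    ⟨j / 3, j % 3, Nat.mod_lt _ (by norm_num), (Nat.div_add_mod j 3).symm⟩
  have h1 : HMSω ^ (3 * q + r) = HMSω ^ r := by
    rw [pow_add, pow_mul, HMSω_cube, one_pow, one_mul]
  have h2 : HMSω ^ (2 * (3 * q + r)) = HMSω ^ (2 * r) := by
    rw [show 2 * (3 * q + r) = 3 * (2 * q) + 2 * r by ring, pow_add, pow_mul,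
      HMSω_cube, one_pow, one_mul]
  have hdvd : (3 ∣ 3 * q + r) ↔ (3 ∣ r) := by omega
  rw [h1, h2, if_congr hdvd rfl rfl]
  interval_cases r
  · norm_num
  · rw [if_neg (by norm_num)]
    linear_combination HMSω_sum
  · rw [if_neg (by norm_num)]
    linear_combination HMSω_sum + HMSω * HMSω_cube

lemma HMS_trisect (z : ℂ) :
    (3 : ℂ) * ∑' n : ℕ, z ^ (3 * n) / (3 * n).factorial
      = Complex.exp z + Complex.exp (HMSω * z) + Complex.exp (HMSω ^ 2 * z) := by
  have s1 := HMS_summable z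
  have s2 := HMS_summable (HMSω * z)
  have s3 := HMS_summable (HMSω ^ 2 * z)
  rw [← HMS_exp_tsum z, ← HMS_exp_tsum (HMSω * z), ← HMS_exp_tsum (HMSω ^ 2 * z),
    ← Summable.tsum_add s1 s2, ← Summable.tsum_add (s1.add s2) s3]
  have key : ∀ j : ℕ,
      z ^ j / j.factorial + (HMSω * z) ^ j / j.factorial + (HMSω ^ 2 * z) ^ j / j.factorial
        = (if 3 ∣ j then (3 : ℂ) else 0) * (z ^ j / j.factorial) := by
    intro j
    rw [← HMS_filter j, mul_pow, mul_pow, ← pow_mul]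
    ring
  calc (3 : ℂ) * ∑' n : ℕ, z ^ (3 * n) / (3 * n).factorial
      = ∑' n : ℕ, (if 3 ∣ 3 * n then (3 : ℂ) else 0) * (z ^ (3 * n) / (3 * n).factorial) := by
        rw [← tsum_mul_left]
        exact tsum_congr fun n => by rw [if_pos ⟨n, rfl⟩]
    _ = ∑' j : ℕ, (if 3 ∣ j then (3 : ℂ) else 0) * (z ^ j / j.factorial) := by
        refine Function.Injective.tsum_eq (g := fun n : ℕ => 3 * n)
          (f := fun j : ℕ => (if 3 ∣ j then (3 : ℂ) else 0) * (z ^ j / j.factorial))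
          (fun a b h => by simpa using h) ?_
        intro j hj
        rcases (em (3 ∣ j)) with ⟨n, rfl⟩ | h
        · exact ⟨n, rfl⟩
        · simp [if_neg h] at hj
    _ = _ := tsum_congr fun j => (key j).symm

lemma HMSω_conj : (starRingEnd ℂ) HMSω = HMSω ^ 2 := by
  have h := HMS_s_sq
  have hI := Complex.I_sq
  unfold HMSω
  simp only [map_div₀, map_add, map_neg, map_one, map_mul, Complex.conj_ofReal,
    Complex.conj_I, map_ofNat]
  linear_combination (-(Complex.I ^ 2) / 4) * h + (-3 / 4) * hI

lemma HMS_key1 (x : ℝ) : ∑' n : ℕ, x ^ (3 * n) / (3 * n).factorial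
    = (Real.exp x + 2 * (Real.exp (-x / 2) * Real.cos (Real.sqrt 3 * x / 2))) / 3 := by
  have hmul : HMSω * (x : ℂ)
      = ((-x / 2 : ℝ) : ℂ) + ((Real.sqrt 3 * x / 2 : ℝ) : ℂ) * Complex.I := by
    unfold HMSω; push_cast; ring
  have hre : (Complex.exp (HMSω * (x : ℂ))).re
      = Real.exp (-x / 2) * Real.cos (Real.sqrt 3 * x / 2) := by
    rw [Complex.exp_re, hmul]
    simp
  have hconj : Complex.exp (HMSω ^ 2 * (x : ℂ))
      = (starRingEnd ℂ) (Complex.exp (HMSω * (x : ℂ))) := by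
    rw [← Complex.exp_conj, map_mul, HMSω_conj, Complex.conj_ofReal]
  have h3 := HMS_trisect (x : ℂ)
  have hC : ((∑' n : ℕ, x ^ (3 * n) / (3 * n).factorial : ℝ) : ℂ)
      = (∑' n : ℕ, (x : ℂ) ^ (3 * n) / (3 * n).factorial) := by
    rw [Complex.ofReal_tsum]
    exact tsum_congr fun n => by push_cast; ring
  apply mul_left_cancel₀ (three_ne_zero (α := ℝ))
  rw [← Complex.ofReal_inj, Complex.ofReal_mul, hC, Complex.ofReal_ofNat]
  rw [h3, hconj, add_assoc, Complex.add_conj, hre, ← Complex.ofReal_exp]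
  norm_cast
  ring

lemma HMS_cos_term (x : ℝ) (m : ℕ) :
    x ^ m / m.factorial * Real.cos (m * Real.pi / 3)
      = (((x : ℂ) * Complex.exp ((Real.pi / 3 : ℝ) * Complex.I)) ^ m / m.factorial).re := by
    rw [mul_pow, ← Complex.exp_nat_mul]
    have : ((x : ℂ) ^ m * Complex.exp ((m : ℂ) * ((Real.pi / 3 : ℝ) * Complex.I))
        / (m.factorial : ℂ))
        = ((x ^ m / m.factorial : ℝ) : ℂ)
          * Complex.exp (((m : ℝ) * (Real.pi / 3) : ℝ) * Complex.I) := by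
      push_cast; ring
    rw [this, Complex.re_ofReal_mul, Complex.exp_ofReal_mul_I_re]
    congr 1
    ring

lemma HMS_cos_sum (x : ℝ) : ∑' m : ℕ, x ^ m / m.factorial * Real.cos (m * Real.pi / 3)
    = Real.exp (x / 2) * Real.cos (Real.sqrt 3 * x / 2) := by
  set w : ℂ := (x : ℂ) * Complex.exp ((Real.pi / 3 : ℝ) * Complex.I) with hw
  have hsum := HMS_summable w
  rw [tsum_congr (fun m => HMS_cos_term x m), ← Complex.re_tsum hsum, HMS_exp_tsum w]
  have hwre : w.re = x / 2 := by
    rw [hw, Complex.re_ofReal_mul, Complex.exp_ofReal_mul_I_re, Real.cos_pi_div_three]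
    ring
  have hwim : w.im = Real.sqrt 3 * x / 2 := by
    rw [hw, Complex.im_ofReal_mul, Complex.exp_ofReal_mul_I_im, Real.sin_pi_div_three]
    ring
  rw [Complex.exp_re, hwre, hwim]

theorem exp_mul_trisection_series (x : ℝ) :
    Real.exp x * ∑' n : ℕ, x ^ (3 * n) / (3 * n).factorial =
      2 / 3 * ∑' m : ℕ, x ^ m / m.factorial *
        ((2 : ℝ) ^ ((m : ℤ) - 1) + Real.cos (m * Real.pi / 3)) := by
  have hterm : ∀ m : ℕ, x ^ m / m.factorial * ((2 : ℝ) ^ ((m : ℤ) - 1)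
        + Real.cos (m * Real.pi / 3))
      = (2 * x) ^ m / m.factorial / 2 + x ^ m / m.factorial * Real.cos (m * Real.pi / 3) := by
    intro m
    have h2 : (2 : ℝ) ^ ((m : ℤ) - 1) = 2 ^ m / 2 := by
      rw [zpow_sub₀ (two_ne_zero), zpow_natCast, zpow_one]
    rw [h2, mul_pow]
    ring
  have hs1 : Summable fun m : ℕ => (2 * x) ^ m / m.factorial / 2 :=
    (Real.summable_pow_div_factorial (2 * x)).div_const 2
  have hs2 : Summable fun m : ℕ => x ^ m / m.factorial * Real.cos (m * Real.pi / 3) := by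
    have := Complex.hasSum_re (HMS_summable
      ((x : ℂ) * Complex.exp ((Real.pi / 3 : ℝ) * Complex.I))).hasSum
    exact this.summable.congr fun m => (HMS_cos_term x m).symm
  rw [tsum_congr hterm, Summable.tsum_add hs1 hs2, HMS_cos_sum, HMS_key1]
  have ht1 : ∑' m : ℕ, (2 * x) ^ m / m.factorial / 2 = Real.exp (2 * x) / 2 := by
    rw [tsum_div_const]
    congr 1
    rw [Real.exp_eq_exp_ℝ, NormedSpace.exp_eq_tsum_div]
  rw [ht1]
  have hA : Real.exp x * Real.exp x = Real.exp (2 * x) := by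
    rw [← Real.exp_add]; congr 1; ring
  have hB : Real.exp x * Real.exp (-x / 2) = Real.exp (x / 2) := by
    rw [← Real.exp_add]; congr 1; ring
  linear_combination hA / 3 + (2 * Real.cos (Real.sqrt 3 * x / 2) / 3) * hB
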